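/- Given a signature ε of the restricted root system Δ = Δ(𝔤,𝔞) of a semisimple Lie algebra 𝔤 with root space decomposition 𝔤 = 𝔷_𝔤(𝔞) ⊕ ⨁_{α∈Δ} 𝔤^α, the linear map σ_ε defined by σ_ε(X) = X for X ∈ 𝔷_𝔤(𝔞) and σ_ε(X) = ε(α)X for X ∈ 𝔤^α is an involutive Lie algebra automorphism of 𝔤. -/

import Mathlib

/-- Given a root space decomposition `𝔤 = 𝔷 ⊕ ⨁_{α∈Δ} 𝔤^α` of a Lie algebra and a
signature `ε` of `Δ`, the map fixing `𝔷` and acting by `ε(α)` on `𝔤^α` is an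
involutive Lie algebra automorphism. -/
theorem stmt_1 {L : Type*} [LieRing L] [LieAlgebra ℝ L]
    {A : Type*} [AddCommGroup A]    -- the space 𝔞* containing the roots
    (Δ : Set A) (hneg : ∀ α ∈ Δ, -α ∈ Δ)
    (z : Submodule ℝ L) (g : A → Submodule ℝ L)
    -- direct sum decomposition 𝔤 = 𝔷_𝔤(𝔞) ⊕ ⨁_{α∈Δ} 𝔤^α
    (hsup : z ⊔ (⨆ α ∈ Δ, g α) = ⊤)
    (hindep : ∀ x ∈ z, ∀ f : A → L, (∀ α, f α ∈ g α) ∧ (∀ α ∉ Δ, f α = 0) ∧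
        (Set.Finite {α | f α ≠ 0}) → x + ∑ᶠ α, f α = 0 →
        x = 0 ∧ ∀ α, f α = 0)
    -- bracket relations of the root space decomposition
    (hzz : ∀ x ∈ z, ∀ y ∈ z, ⁅x, y⁆ ∈ z)
    (hzg : ∀ α ∈ Δ, ∀ x ∈ z, ∀ y ∈ g α, ⁅x, y⁆ ∈ g α)
    (hgg : ∀ α ∈ Δ, ∀ β ∈ Δ, ∀ x ∈ g α, ∀ y ∈ g β,
        (α + β ∈ Δ → ⁅x, y⁆ ∈ g (α + β)) ∧
        (α + β = 0 → ⁅x, y⁆ ∈ z) ∧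
        (α + β ∉ Δ → α + β ≠ 0 → ⁅x, y⁆ = 0))
    -- a signature of Δ
    (ε : A → ℝ) (hε1 : ∀ α ∈ Δ, ε α = 1 ∨ ε α = -1)
    (hεneg : ∀ α ∈ Δ, ε (-α) = ε α)
    (hεadd : ∀ α ∈ Δ, ∀ β ∈ Δ, α + β ∈ Δ → ε (α + β) = ε α * ε β) :
    ∃ σ : L ≃ₗ⁅ℝ⁆ L,
      (∀ x, σ (σ x) = x) ∧
      (∀ x ∈ z, σ x = x) ∧
      (∀ α ∈ Δ, ∀ x ∈ g α, σ x = ε α • x) := by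
  classical
  -- square of signature is 1
  have hsq : ∀ α ∈ Δ, ε α * ε α = 1 := by
    intro α hα; rcases hε1 α hα with h | h <;> rw [h] <;> norm_num
  -- the "graph" submodule
  set S : A → Submodule ℝ L := fun α => if α ∈ Δ then g α else ⊥ with hS
  set T : A → Submodule ℝ (L × L) :=
    fun α => (S α).map (LinearMap.prod LinearMap.id (ε α • LinearMap.id)) with hT
  set G : Submodule ℝ (L × L) :=
    z.map (LinearMap.prod LinearMap.id LinearMap.id) ⊔ ⨆ α, T α with hG
  have hSsup : (⨆ α, S α) = ⨆ α ∈ Δ, g α := by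
    refine iSup_congr fun α => ?_
    by_cases hα : α ∈ Δ <;> simp [hS, hα]
  -- generators of G
  have hzG : ∀ x ∈ z, ((x, x) : L × L) ∈ G := by
    intro x hx
    exact Submodule.mem_sup_left ⟨x, hx, rfl⟩
  have hgG : ∀ α ∈ Δ, ∀ x ∈ g α, ((x, ε α • x) : L × L) ∈ G := by
    intro α hα x hx
    refine Submodule.mem_sup_right (Submodule.mem_iSup_of_mem α ?_)
    refine ⟨x, ?_, rfl⟩
    simp [hS, hα, hx]
  -- existence: every x has some y with (x,y) ∈ G
  have hex : ∀ x : L, ∃ y, ((x, y) : L × L) ∈ G := by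
    intro x
    have hmap : G.map (LinearMap.fst ℝ L L) = ⊤ := by
      rw [hG, Submodule.map_sup, Submodule.map_iSup]
      have h1 : ∀ (p : Submodule ℝ L) (f : L →ₗ[ℝ] L),
          (p.map (LinearMap.prod LinearMap.id f)).map (LinearMap.fst ℝ L L) = p := by
        intro p f
        ext v
        constructor
        · rintro ⟨q, ⟨m, hm, rfl⟩, rfl⟩; simpa using hm
        · intro hv; exact ⟨(v, f v), ⟨v, hv, rfl⟩, rfl⟩
      rw [h1]
      have h2 : ∀ α, (T α).map (LinearMap.fst ℝ L L) = S α := fun α => h1 _ _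
      simp_rw [h2, hSsup, hsup]
    have : x ∈ G.map (LinearMap.fst ℝ L L) := by rw [hmap]; trivial
    obtain ⟨p, hp, hpx⟩ := this
    exact ⟨p.2, by rwa [show ((x, p.2) : L × L) = p from Prod.ext hpx.symm rfl]⟩
  -- membership in T α gives the component relations
  have hTmem : ∀ α (q : L × L), q ∈ T α → q.1 ∈ S α ∧ q.2 = ε α • q.1 := by
    intro α q hq
    obtain ⟨m, hm, rfl⟩ := hq
    exact ⟨hm, rfl⟩
  -- zero lemma
  have hzero : ∀ y : L, ((0, y) : L × L) ∈ G → y = 0 := by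
    intro y hy
    rw [hG, Submodule.mem_sup] at hy
    obtain ⟨p, hp, q, hq, hpq⟩ := hy
    obtain ⟨a, ha, rfl⟩ := hp
    rw [Submodule.mem_iSup_iff_exists_finsupp] at hq
    obtain ⟨F, hF, hFsum⟩ := hq
    set f : A → L := fun α => (F α).1 with hf
    have hf1 : ∀ α, f α ∈ S α := fun α => (hTmem α _ (hF α)).1
    have hf2 : ∀ α, (F α).2 = ε α • f α := fun α => (hTmem α _ (hF α)).2
    have hfg : ∀ α, f α ∈ g α := by
      intro α
      by_cases hα : α ∈ Δ
      · have := hf1 α; simp only [hS, if_pos hα] at this; exact this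
      · have := hf1 α; simp only [hS, if_neg hα] at this
        rw [Submodule.mem_bot] at this
        rw [this]; exact (g α).zero_mem
    have hfnd : ∀ α ∉ Δ, f α = 0 := by
      intro α hα
      have := hf1 α; simp only [hS, if_neg hα, Submodule.mem_bot] at this; exact this
    have hsupp : Function.support f ⊆ ↑F.support := by
      intro α hα
      simp only [Finset.mem_coe, Finsupp.mem_support_iff]
      intro h0
      apply hα
      simp [hf, h0]
    have hfin : (Set.Finite {α | f α ≠ 0}) := Set.Finite.subset F.support.finite_toSet hsupp
    have hsum1 : (∑ᶠ α, f α) = ∑ α ∈ F.support, f α :=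
      finsum_eq_sum_of_support_subset f hsupp
    have hq : q = ((0, y) : L × L) - (a, a) := by
      have h : ((a, a) : L × L) + q = (0, y) := by simpa using hpq
      exact eq_sub_of_add_eq' h
    have hsum2 : (∑ α ∈ F.support, F α) = ((0, y) : L × L) - (a, a) := by
      rw [← hq, ← hFsum]; simp [Finsupp.sum]
    have hfs : (∑ α ∈ F.support, f α) = -a := by
      have h := congrArg Prod.fst hsum2
      simpa [Prod.fst_sum, hf] using h
    have hfst : a + ∑ᶠ α, f α = 0 := by
      rw [hsum1, hfs]; abel
    obtain ⟨ha0, hf0⟩ := hindep a ha f ⟨hfg, hfnd, hfin⟩ hfst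
    -- conclude y = 0
    have hsnd : y - a = (∑ α ∈ F.support, F α).2 := by
      rw [hsum2]; simp
    have hzero2 : (∑ α ∈ F.support, F α).2 = 0 := by
      rw [Prod.snd_sum]
      refine Finset.sum_eq_zero fun α _ => ?_
      rw [hf2 α, hf0 α, smul_zero]
    rw [hzero2] at hsnd
    rw [sub_eq_zero] at hsnd
    rw [hsnd, ha0]
  -- uniqueness
  have huniq : ∀ x y₁ y₂ : L, ((x, y₁) : L × L) ∈ G → ((x, y₂) : L × L) ∈ G → y₁ = y₂ := by
    intro x y₁ y₂ h1 h2
    have : ((0, y₁ - y₂) : L × L) ∈ G := by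
      have := G.sub_mem h1 h2
      simpa using this
    exact sub_eq_zero.mp (hzero _ this)
  -- the map
  set σf : L → L := fun x => Classical.choose (hex x) with hσf
  have hσ : ∀ x, ((x, σf x) : L × L) ∈ G := fun x => Classical.choose_spec (hex x)
  have hval : ∀ x y : L, ((x, y) : L × L) ∈ G → σf x = y :=
    fun x y h => huniq x _ _ (hσ x) h
  have hadd : ∀ x y, σf (x + y) = σf x + σf y := by
    intro x y
    exact hval _ _ (by simpa using G.add_mem (hσ x) (hσ y))
  have hsmul : ∀ (c : ℝ) x, σf (c • x) = c • σf x := by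
    intro c x
    exact hval _ _ (by simpa [Prod.smul_mk] using G.smul_mem c (hσ x))
  set σ : L →ₗ[ℝ] L := ⟨⟨σf, fun x y => hadd x y⟩, fun c x => hsmul c x⟩ with hσdef
  -- values on generators
  have hvalz : ∀ x ∈ z, σf x = x := fun x hx => hval _ _ (hzG x hx)
  have hvalg : ∀ α ∈ Δ, ∀ x ∈ g α, σf x = ε α • x :=
    fun α hα x hx => hval _ _ (hgG α hα x hx)
  -- symmetry of G
  have hswap : ∀ p : L × L, p ∈ G → ((p.2, p.1) : L × L) ∈ G := by
    have : G ≤ G.comap (LinearMap.prod (LinearMap.snd ℝ L L) (LinearMap.fst ℝ L L)) := by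
      rw [hG]
      refine sup_le ?_ (iSup_le fun α => ?_)
      · rintro p ⟨a, ha, rfl⟩
        exact hzG a ha
      · rintro p ⟨m, hm, rfl⟩
        by_cases hα : α ∈ Δ
        · simp only [hS, if_pos hα] at hm
          have h2 : ((ε α • m, m) : L × L) ∈ G := by
            have := hgG α hα (ε α • m) ((g α).smul_mem _ hm)
            rwa [smul_smul, hsq α hα, one_smul] at this
          simpa using h2
        · simp only [hS, if_neg hα, Submodule.mem_bot] at hm
          subst hm
          simp
          exact Submodule.zero_mem _
    intro p hp
    exact this hp
  have hinv : ∀ x, σf (σf x) = x := by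
    intro x
    exact hval _ _ (hswap _ (hσ x))
  -- compatibility with brackets
  have hgen : ∀ (p : Submodule ℝ L), z ≤ p → (∀ α ∈ Δ, g α ≤ p) → ∀ x : L, x ∈ p := by
    intro p h1 h2 x
    have : (⊤ : Submodule ℝ L) ≤ p := by
      rw [← hsup]; exact sup_le h1 (iSup_le fun α => iSup_le (h2 α))
    exact this trivial
  have hbrG : ∀ x y : L, ((⁅x, y⁆, ⁅σf x, σf y⁆) : L × L) ∈ G := by
    have key : ∀ x, (x ∈ z ∨ ∃ α ∈ Δ, x ∈ g α) → ∀ y, (y ∈ z ∨ ∃ α ∈ Δ, y ∈ g α) →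
        ((⁅x, y⁆, ⁅σf x, σf y⁆) : L × L) ∈ G := by
      rintro x (hx | ⟨α, hα, hx⟩) y (hy | ⟨β, hβ, hy⟩)
      · rw [hvalz x hx, hvalz y hy]
        exact hzG _ (hzz x hx y hy)
      · rw [hvalz x hx, hvalg β hβ y hy, lie_smul]
        exact hgG β hβ _ (hzg β hβ x hx y hy)
      · rw [hvalz y hy, hvalg α hα x hx, smul_lie]
        have hmem : (⁅x, y⁆ : L) ∈ g α := by
          have := (g α).neg_mem (hzg α hα y hy x hx)
          rwa [← lie_skew, neg_neg] at this
        exact hgG α hα _ hmem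
      · rw [hvalg α hα x hx, hvalg β hβ y hy, smul_lie, lie_smul, smul_smul]
        obtain ⟨h1, h2, h3⟩ := hgg α hα β hβ x hx y hy
        by_cases hab : α + β ∈ Δ
        · have := hgG _ hab _ (h1 hab)
          rwa [hεadd α hα β hβ hab] at this
        · by_cases hab0 : α + β = 0
          · have hβα : β = -α := eq_neg_of_add_eq_zero_right hab0
            have hεβ : ε β = ε α := by rw [hβα]; exact hεneg α hα
            rw [hεβ, hsq α hα, one_smul]
            exact hzG _ (h2 hab0)
          · rw [h3 hab hab0]
            simp
            exact Submodule.zero_mem _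
    have step1 : ∀ x, (x ∈ z ∨ ∃ α ∈ Δ, x ∈ g α) → ∀ y,
        ((⁅x, y⁆, ⁅σf x, σf y⁆) : L × L) ∈ G := by
      intro x hx y
      have hy : y ∈ G.comap (LinearMap.prod ((LieAlgebra.ad ℝ L x))
          (((LieAlgebra.ad ℝ L (σf x))).comp σ)) := by
        refine hgen _ ?_ ?_ y
        · intro w hw
          have := key x hx w (Or.inl hw)
          simpa [LieAlgebra.ad_apply, hσdef] using this
        · intro β hβ w hw
          have := key x hx w (Or.inr ⟨β, hβ, hw⟩)
          simpa [LieAlgebra.ad_apply, hσdef] using this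
      simpa [LieAlgebra.ad_apply, hσdef] using hy
    intro x y
    have hx : x ∈ G.comap (LinearMap.prod (-(LieAlgebra.ad ℝ L y))
        ((-(LieAlgebra.ad ℝ L (σf y))).comp σ)) := by
      refine hgen _ ?_ ?_ x
      · intro w hw
        have := step1 w (Or.inl hw) y
        have h2 : ((-⁅y, w⁆, -⁅σf y, σf w⁆) : L × L) ∈ G := by
          rw [lie_skew, lie_skew]; exact this
        simpa [LieAlgebra.ad_apply, hσdef] using h2
      · intro β hβ w hw
        have := step1 w (Or.inr ⟨β, hβ, hw⟩) y
        have h2 : ((-⁅y, w⁆, -⁅σf y, σf w⁆) : L × L) ∈ G := by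
          rw [lie_skew, lie_skew]; exact this
        simpa [LieAlgebra.ad_apply, hσdef] using h2
    have hx2 : ((-⁅y, x⁆, -⁅σf y, σf x⁆) : L × L) ∈ G := by
      simpa [LieAlgebra.ad_apply, hσdef] using hx
    rw [lie_skew, lie_skew] at hx2
    exact hx2
  have hbr : ∀ x y : L, σf ⁅x, y⁆ = ⁅σf x, σf y⁆ :=
    fun x y => hval _ _ (hbrG x y)
  refine ⟨{ toLieHom := { toLinearMap := σ, map_lie' := fun {x y} => hbr x y },
            invFun := σf, left_inv := hinv, right_inv := hinv }, ?_, ?_, ?_⟩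
  · exact hinv
  · exact hvalz
  · exact hvalg
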